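/- Well membership criteria: (a) if ‖u‖_{1,a} < √(2r), then u belongs to the potential well 𝒲 = {u : J(u) < r, N(u) > 0} ∪ {0}; (b) conversely, if u ∈ 𝒲 then ‖u‖_{1,a} < √(2(p+1)r/(p-1)). -/

import Mathlib

open Finset Real

noncomputable section

/-- A finite weighted graph: positive vertex measure `mu`, symmetric nonnegative
edge weights `w` (an edge `x ∼ y` is present iff `0 < w x y`). -/
structure WGraph (V : Type*) [Fintype V] where
  mu : V → ℝ
  w : V → V → ℝ
  mu_pos : ∀ x, 0 < mu x
  w_symm : ∀ x y, w x y = w y x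
  w_nonneg : ∀ x y, 0 ≤ w x y

variable {V : Type*} [Fintype V]

/-- Integration on the graph: `∫_V f dμ = Σ_x μ(x) f(x)`. -/
def WGraph.integral (G : WGraph V) (f : V → ℝ) : ℝ := ∑ x, G.mu x * f x

/-- The μ-Laplacian: `Δu(x) = (1/μ(x)) Σ_y ω_{xy}(u(y)-u(x))`. -/
def WGraph.lap (G : WGraph V) (u : V → ℝ) (x : V) : ℝ :=
  (∑ y, G.w x y * (u y - u x)) / G.mu x

/-- Discrete Dirichlet pairing `∫_V ∇u∇v dμ = (1/2)Σ_xΣ_y ω_{xy}(u(y)-u(x))(v(y)-v(x))`. -/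
def WGraph.dirichlet (G : WGraph V) (u v : V → ℝ) : ℝ :=
  (1 / 2) * ∑ x, ∑ y, G.w x y * (u y - u x) * (v y - v x)

/-- Connectedness: any two vertices are joined by a finite chain of edges. -/
def WGraph.Connected (G : WGraph V) : Prop :=
  ∀ x y : V, Relation.ReflTransGen (fun a b => 0 < G.w a b) x y

/-- `‖u‖²_{1,a} = ∫_V (|∇u|² + a u²) dμ`. -/
def WGraph.norm1aSq (G : WGraph V) (a : V → ℝ) (u : V → ℝ) : ℝ :=
  G.dirichlet u u + G.integral (fun x => a x * u x ^ 2)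

/-- The first eigenvalue `λ_a` of `-Δ + a`, as the infimum of the Rayleigh quotient. -/
noncomputable def rayleighInf (G : WGraph V) (a : V → ℝ) : ℝ :=
  sInf {r : ℝ | ∃ u : V → ℝ, u ≠ 0 ∧
    r = G.norm1aSq a u / G.integral (fun x => u x ^ 2)}

/-- The energy functional `J(u) = (1/2)∫(|∇u|²+au²)dμ - (1/(p+1))∫|u|^{p+1}dμ`. -/
noncomputable def WGraph.J (G : WGraph V) (a : V → ℝ) (p : ℝ) (u : V → ℝ) : ℝ :=
  (1/2) * G.norm1aSq a u - (1/(p+1)) * G.integral (fun x => |u x| ^ (p+1))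

/-- The Nehari functional `N(u) = ∫(|∇u|²+au²)dμ - ∫|u|^{p+1}dμ`. -/
noncomputable def WGraph.nehari (G : WGraph V) (a : V → ℝ) (p : ℝ) (u : V → ℝ) : ℝ :=
  G.norm1aSq a u - G.integral (fun x => |u x| ^ (p+1))

/-- The Sobolev-type constant `Λ`. -/
noncomputable def sobolevInf (G : WGraph V) (a : V → ℝ) (p : ℝ) : ℝ :=
  sInf {r : ℝ | ∃ u : V → ℝ, u ≠ 0 ∧
    r = G.norm1aSq a u / (G.integral (fun x => |u x| ^ (p+1))) ^ (2/(p+1))}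

/-- The depth `r` of the potential well. -/
noncomputable def wellDepth (G : WGraph V) (a : V → ℝ) (p : ℝ) : ℝ :=
  sInf {r : ℝ | ∃ u : V → ℝ, u ≠ 0 ∧ G.nehari a p u = 0 ∧ r = G.J a p u}
section Aux

variable {V : Type*} [Fintype V]

lemma dirichlet_nonneg (G : WGraph V) (u : V → ℝ) : 0 ≤ G.dirichlet u u := by
  unfold WGraph.dirichlet
  apply mul_nonneg (by norm_num)
  refine Finset.sum_nonneg fun x _ => Finset.sum_nonneg fun y _ => ?_
  rw [mul_assoc]
  exact mul_nonneg (G.w_nonneg x y) (mul_self_nonneg _)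

lemma integral_nonneg' (G : WGraph V) {f : V → ℝ} (hf : ∀ x, 0 ≤ f x) :
    0 ≤ G.integral f :=
  Finset.sum_nonneg fun x _ => mul_nonneg (G.mu_pos x).le (hf x)

lemma norm1aSq_nonneg (G : WGraph V) {a : V → ℝ} (ha : ∀ x, 0 ≤ a x) (u : V → ℝ) :
    0 ≤ G.norm1aSq a u :=
  add_nonneg (dirichlet_nonneg G u)
    (integral_nonneg' G fun x => mul_nonneg (ha x) (sq_nonneg _))

lemma intP_nonneg (G : WGraph V) (p : ℝ) (u : V → ℝ) :
    0 ≤ G.integral fun x => |u x| ^ (p + 1) :=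
  integral_nonneg' G fun x => Real.rpow_nonneg (abs_nonneg _) _

lemma intP_pos (G : WGraph V) (p : ℝ) {u : V → ℝ} (hu : u ≠ 0) :
    0 < G.integral fun x => |u x| ^ (p + 1) := by
  obtain ⟨x0, hx0⟩ := Function.ne_iff.1 hu
  refine Finset.sum_pos' (fun x _ => mul_nonneg (G.mu_pos x).le
    (Real.rpow_nonneg (abs_nonneg _) _)) ⟨x0, Finset.mem_univ _, ?_⟩
  exact mul_pos (G.mu_pos x0) (Real.rpow_pos_of_pos (abs_pos.2 hx0) _)

lemma norm1aSq_pos (G : WGraph V) (hconn : G.Connected) {a : V → ℝ}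
    (ha : ∀ x, 0 ≤ a x) (ha0 : a ≠ 0) {u : V → ℝ} (hu : u ≠ 0) :
    0 < G.norm1aSq a u := by
  rcases lt_or_eq_of_le (norm1aSq_nonneg G ha u) with h | h
  · exact h
  exfalso
  have hD0 : 0 ≤ G.dirichlet u u := dirichlet_nonneg G u
  have hI0 : 0 ≤ G.integral fun x => a x * u x ^ 2 :=
    integral_nonneg' G fun x => mul_nonneg (ha x) (sq_nonneg (u x))
  have hn : G.dirichlet u u + G.integral (fun x => a x * u x ^ 2) = 0 := h.symm
  have hd : G.dirichlet u u = 0 := by linarith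
  have hi : G.integral (fun x => a x * u x ^ 2) = 0 := by linarith
  -- from hd: u is constant along edges
  have hterm : ∀ x y : V, G.w x y * (u y - u x) * (u y - u x) = 0 := by
    unfold WGraph.dirichlet at hd
    have hsum : ∑ x, ∑ y, G.w x y * (u y - u x) * (u y - u x) = 0 := by linarith
    have h1 := (Finset.sum_eq_zero_iff_of_nonneg
      (fun x _ => Finset.sum_nonneg fun y _ => by
        rw [mul_assoc]; exact mul_nonneg (G.w_nonneg x y) (mul_self_nonneg _))).1 hsum
    intro x y
    have h2 := (Finset.sum_eq_zero_iff_of_nonneg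
      (fun y _ => by
        rw [mul_assoc]; exact mul_nonneg (G.w_nonneg x y) (mul_self_nonneg _))).1
      (h1 x (Finset.mem_univ x)) y (Finset.mem_univ y)
    exact h2
  have hedge : ∀ x y : V, 0 < G.w x y → u y = u x := by
    intro x y hw
    have := hterm x y
    rw [mul_assoc] at this
    have h2 : (u y - u x) * (u y - u x) = 0 := by
      rcases mul_eq_zero.1 this with h | h
      · exact absurd h (ne_of_gt hw)
      · exact h
    have := mul_self_eq_zero.1 h2
    linarith
  have hconst : ∀ x y : V, u x = u y := by
    intro x y
    induction hconn x y with
    | refl => rfl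
    | tail _ hbc ih => rw [ih, hedge _ _ hbc]
  -- from hi: a x * u x ^ 2 = 0 for all x
  obtain ⟨x0, hx0⟩ := Function.ne_iff.1 ha0
  have hiz : ∀ x : V, G.mu x * (a x * u x ^ 2) = 0 := by
    intro x
    exact (Finset.sum_eq_zero_iff_of_nonneg (fun x _ => mul_nonneg (G.mu_pos x).le
      (mul_nonneg (ha x) (sq_nonneg _)))).1 hi x (Finset.mem_univ x)
  rw [Pi.zero_apply] at hx0
  have hux0 : u x0 = 0 := by
    have h3 := hiz x0
    have ha' : 0 < a x0 := lt_of_le_of_ne (ha x0) (Ne.symm hx0)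
    have hmu := G.mu_pos x0
    have h4 : a x0 * u x0 ^ 2 = 0 := by
      rcases mul_eq_zero.1 h3 with h | h
      · exact absurd h (ne_of_gt hmu)
      · exact h
    have h5 : u x0 ^ 2 = 0 := by
      rcases mul_eq_zero.1 h4 with h | h
      · exact absurd h (ne_of_gt ha')
      · exact h
    exact pow_eq_zero_iff (two_ne_zero) |>.1 h5
  apply hu
  funext x
  rw [Pi.zero_apply, hconst x x0, hux0]

lemma dirichlet_smul (G : WGraph V) (u : V → ℝ) (t : ℝ) :
    G.dirichlet (fun x => t * u x) (fun x => t * u x) = t ^ 2 * G.dirichlet u u := by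
  unfold WGraph.dirichlet
  have h : ∀ x y : V, G.w x y * (t * u y - t * u x) * (t * u y - t * u x)
      = t ^ 2 * (G.w x y * (u y - u x) * (u y - u x)) := by intros; ring
  simp only [h, ← Finset.mul_sum]
  ring

lemma norm1aSq_smul (G : WGraph V) (a : V → ℝ) (u : V → ℝ) (t : ℝ) :
    G.norm1aSq a (fun x => t * u x) = t ^ 2 * G.norm1aSq a u := by
  unfold WGraph.norm1aSq WGraph.integral
  rw [dirichlet_smul]
  have h : ∀ x : V, G.mu x * (a x * (t * u x) ^ 2) = t ^ 2 * (G.mu x * (a x * u x ^ 2)) := by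
    intros; ring
  simp only [h, ← Finset.mul_sum]
  ring

lemma intP_smul (G : WGraph V) (p : ℝ) (u : V → ℝ) {t : ℝ} (ht : 0 ≤ t) :
    (G.integral fun x => |t * u x| ^ (p + 1))
      = t ^ (p + 1) * G.integral fun x => |u x| ^ (p + 1) := by
  unfold WGraph.integral
  have h : ∀ x : V, G.mu x * |t * u x| ^ (p + 1)
      = t ^ (p + 1) * (G.mu x * |u x| ^ (p + 1)) := by
    intro x
    rw [abs_mul, abs_of_nonneg ht, Real.mul_rpow ht (abs_nonneg _)]
    ring
  simp only [h, ← Finset.mul_sum]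

lemma cont_norm1aSq (G : WGraph V) (a : V → ℝ) :
    Continuous (fun u : V → ℝ => G.norm1aSq a u) := by
  unfold WGraph.norm1aSq WGraph.dirichlet WGraph.integral
  fun_prop

lemma cont_intP (G : WGraph V) {p : ℝ} (hp : 1 < p) :
    Continuous (fun u : V → ℝ => G.integral fun x => |u x| ^ (p + 1)) := by
  unfold WGraph.integral
  apply continuous_finset_sum
  intro x _
  exact continuous_const.mul
    ((Real.continuous_rpow_const (by linarith)).comp ((continuous_apply x).abs))

lemma Q_smul (G : WGraph V) (a : V → ℝ) {p : ℝ} (hp : 1 < p) {u : V → ℝ} (hu : u ≠ 0)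
    {t : ℝ} (ht : 0 < t) :
    G.norm1aSq a (fun x => t * u x)
        / (G.integral fun x => |t * u x| ^ (p + 1)) ^ (2 / (p + 1))
      = G.norm1aSq a u / (G.integral fun x => |u x| ^ (p + 1)) ^ (2 / (p + 1)) := by
  have hp1 : (0:ℝ) < p + 1 := by linarith
  rw [norm1aSq_smul, intP_smul G p u ht.le,
    Real.mul_rpow (Real.rpow_nonneg ht.le _) (intP_nonneg G p u),
    ← Real.rpow_natCast t 2, ← Real.rpow_mul ht.le]
  have he : (p + 1) * (2 / (p + 1)) = ((2:ℕ):ℝ) := by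
    field_simp
    norm_num
  rw [he, mul_div_mul_left _ _ (ne_of_gt (Real.rpow_pos_of_pos ht _))]

lemma exists_Q_lb [Nonempty V] (G : WGraph V) (hconn : G.Connected) {p : ℝ} (hp : 1 < p)
    {a : V → ℝ} (ha : ∀ x, 0 ≤ a x) (ha0 : a ≠ 0) :
    ∃ c : ℝ, 0 < c ∧ ∀ u : V → ℝ, u ≠ 0 →
      c ≤ G.norm1aSq a u / (G.integral fun x => |u x| ^ (p + 1)) ^ (2 / (p + 1)) := by
  have hp1 : (0:ℝ) < p + 1 := by linarith
  set Q : (V → ℝ) → ℝ := fun u =>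
    G.norm1aSq a u / (G.integral fun x => |u x| ^ (p + 1)) ^ (2 / (p + 1)) with hQ
  have hS : IsCompact (Metric.sphere (0 : V → ℝ) 1) := isCompact_sphere _ _
  have hne : (Metric.sphere (0 : V → ℝ) 1).Nonempty :=
    NormedSpace.sphere_nonempty.2 zero_le_one
  have hcont : ContinuousOn Q (Metric.sphere (0 : V → ℝ) 1) := by
    apply ContinuousOn.div (cont_norm1aSq G a).continuousOn
      (((Real.continuous_rpow_const (by positivity)).comp (cont_intP G hp)).continuousOn)
    intro u huS
    have hu : u ≠ 0 := by
      intro h; rw [h] at huS; simp at huS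
    exact ne_of_gt (Real.rpow_pos_of_pos (intP_pos G p hu) _)
  obtain ⟨u0, hu0S, hmin⟩ := hS.exists_isMinOn hne hcont
  have hu0 : u0 ≠ 0 := by
    intro h; rw [h] at hu0S; simp at hu0S
  refine ⟨Q u0, div_pos (norm1aSq_pos G hconn ha ha0 hu0)
    (Real.rpow_pos_of_pos (intP_pos G p hu0) _), ?_⟩
  intro u hu
  have hnu : (0:ℝ) < ‖u‖ := norm_pos_iff.2 hu
  set t : ℝ := ‖u‖⁻¹ with htdef
  have ht : 0 < t := inv_pos.2 hnu
  have hv : (fun x => t * u x) ∈ Metric.sphere (0 : V → ℝ) 1 := by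
    have : (fun x => t * u x) = t • u := by funext x; simp
    rw [this, mem_sphere_iff_norm, sub_zero, norm_smul, norm_inv, norm_norm]
    field_simp
  have := hmin hv
  calc Q u0 ≤ Q (fun x => t * u x) := this
    _ = Q u := Q_smul G a hp hu ht

lemma sobolevInf_pos [Nonempty V] (G : WGraph V) (hconn : G.Connected) {p : ℝ} (hp : 1 < p)
    {a : V → ℝ} (ha : ∀ x, 0 ≤ a x) (ha0 : a ≠ 0) :
    0 < sobolevInf G a p := by
  obtain ⟨c, hc, hlb⟩ := exists_Q_lb G hconn hp ha ha0
  apply lt_of_lt_of_le hc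
  apply le_csInf
  · refine ⟨_, fun _ => (1:ℝ), fun h => one_ne_zero (congrFun h (Classical.arbitrary V)), rfl⟩
  · rintro r ⟨u, hu, rfl⟩
    exact hlb u hu

lemma sobolevInf_le [Nonempty V] (G : WGraph V) (hconn : G.Connected) {p : ℝ} (hp : 1 < p)
    {a : V → ℝ} (ha : ∀ x, 0 ≤ a x) (ha0 : a ≠ 0) {u : V → ℝ} (hu : u ≠ 0) :
    sobolevInf G a p
      ≤ G.norm1aSq a u / (G.integral fun x => |u x| ^ (p + 1)) ^ (2 / (p + 1)) := by
  obtain ⟨c, hc, hlb⟩ := exists_Q_lb G hconn hp ha ha0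
  exact csInf_le ⟨c, by rintro r ⟨v, hv, rfl⟩; exact hlb v hv⟩ ⟨u, hu, rfl⟩

lemma sobolev_B_le [Nonempty V] (G : WGraph V) (hconn : G.Connected) {p : ℝ} (hp : 1 < p)
    {a : V → ℝ} (ha : ∀ x, 0 ≤ a x) (ha0 : a ≠ 0) {u : V → ℝ} (hu : u ≠ 0) :
    (G.integral fun x => |u x| ^ (p + 1))
      ≤ (G.norm1aSq a u / sobolevInf G a p) ^ ((p + 1) / 2) := by
  have hΛ : 0 < sobolevInf G a p := sobolevInf_pos G hconn hp ha ha0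
  have hB : 0 < G.integral fun x => |u x| ^ (p + 1) := intP_pos G p hu
  have hBr : 0 < (G.integral fun x => |u x| ^ (p + 1)) ^ (2 / (p + 1)) :=
    Real.rpow_pos_of_pos hB _
  have h1 := sobolevInf_le G hconn hp ha ha0 hu
  have h2 : (G.integral fun x => |u x| ^ (p + 1)) ^ (2 / (p + 1))
      ≤ G.norm1aSq a u / sobolevInf G a p := by
    rw [le_div_iff₀ hΛ]
    rw [le_div_iff₀ hBr] at h1
    linarith [h1]
  calc (G.integral fun x => |u x| ^ (p + 1))
      = (((G.integral fun x => |u x| ^ (p + 1)) ^ (2 / (p + 1))) ^ ((p + 1) / 2)) := by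
        rw [← Real.rpow_mul hB.le]
        rw [show 2 / (p + 1) * ((p + 1) / 2) = 1 by field_simp]
        rw [Real.rpow_one]
    _ ≤ (G.norm1aSq a u / sobolevInf G a p) ^ ((p + 1) / 2) :=
        Real.rpow_le_rpow hBr.le h2 (by positivity)

lemma J_eq_on_nehari (G : WGraph V) {p : ℝ} (hp : 1 < p) (a : V → ℝ) {u : V → ℝ}
    (hN : G.nehari a p u = 0) :
    G.J a p u = ((p - 1) / (2 * (p + 1))) * G.norm1aSq a u := by
  unfold WGraph.nehari at hN
  unfold WGraph.J
  have hB : (G.integral fun x => |u x| ^ (p + 1)) = G.norm1aSq a u := by linarith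
  rw [hB]
  have hp1 : p + 1 ≠ 0 := by linarith
  field_simp
  ring

lemma nehari_norm_lb [Nonempty V] (G : WGraph V) (hconn : G.Connected) {p : ℝ} (hp : 1 < p)
    {a : V → ℝ} (ha : ∀ x, 0 ≤ a x) (ha0 : a ≠ 0) {u : V → ℝ} (hu : u ≠ 0)
    (hN : G.nehari a p u = 0) :
    (sobolevInf G a p) ^ ((p + 1) / (p - 1)) ≤ G.norm1aSq a u := by
  have hpm : p - 1 ≠ 0 := ne_of_gt (by linarith)
  have hpp : p + 1 ≠ 0 := by positivity
  have hΛ : 0 < sobolevInf G a p := sobolevInf_pos G hconn hp ha ha0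
  have hA : 0 < G.norm1aSq a u := norm1aSq_pos G hconn ha ha0 hu
  set A := G.norm1aSq a u with hAdef
  set Λ := sobolevInf G a p with hΛdef
  have hAB : A = G.integral fun x => |u x| ^ (p + 1) := by
    unfold WGraph.nehari at hN; linarith
  have h1 : A ≤ (A / Λ) ^ ((p + 1) / 2) := by
    rw [hAB]; exact hAB ▸ sobolev_B_le G hconn hp ha ha0 hu
  rw [Real.div_rpow hA.le hΛ.le] at h1
  have h2 : Λ ^ ((p + 1) / 2) ≤ A ^ ((p - 1) / 2) := by
    have hΛr : 0 < Λ ^ ((p + 1) / 2) := Real.rpow_pos_of_pos hΛ _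
    rw [le_div_iff₀ hΛr] at h1
    have h3 : A ^ ((p - 1) / 2) = A ^ ((p + 1) / 2) / A := by
      rw [show (p-1)/2 = (p+1)/2 - 1 by ring, Real.rpow_sub hA, Real.rpow_one]
    rw [h3, le_div_iff₀ hA]
    linarith
  have h4 := Real.rpow_le_rpow (Real.rpow_pos_of_pos hΛ _).le h2
    (le_of_lt (div_pos (by norm_num : (0:ℝ) < 2) (by linarith : (0:ℝ) < p - 1)))
  rw [← Real.rpow_mul hΛ.le, ← Real.rpow_mul hA.le] at h4
  rw [show (p - 1) / 2 * (2 / (p - 1)) = 1 by field_simp, Real.rpow_one] at h4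
  rw [show (p + 1) / 2 * (2 / (p - 1)) = (p + 1) / (p - 1) by
    field_simp] at h4
  exact h4

lemma rpow_identity {A B p : ℝ} (hA : 0 < A) (hB : 0 < B) (hp : 1 < p) :
    ((A / B) ^ ((1:ℝ) / (p - 1))) ^ 2 * A
      = (A / B ^ (2 / (p + 1))) ^ ((p + 1) / (p - 1)) := by
  have hpm : p - 1 ≠ 0 := ne_of_gt (by linarith)
  have hpp : p + 1 ≠ 0 := by positivity
  have hAB : 0 < A / B := div_pos hA hB
  have hBr : 0 < B ^ (2 / (p + 1)) := Real.rpow_pos_of_pos hB _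
  rw [← Real.rpow_natCast ((A / B) ^ ((1:ℝ) / (p - 1))) 2, ← Real.rpow_mul hAB.le]
  rw [Real.rpow_def_of_pos hAB, Real.rpow_def_of_pos (div_pos hA hBr)]
  rw [Real.log_div hA.ne' hB.ne', Real.log_div hA.ne' hBr.ne', Real.log_rpow hB]
  rw [show (Real.log A - 2 / (p + 1) * Real.log B) * ((p + 1) / (p - 1))
      = (Real.log A - Real.log B) * (1 / (p - 1) * ((2:ℕ):ℝ)) + Real.log A by
    field_simp; ring]
  rw [Real.exp_add, Real.exp_log hA]

lemma nehari_exists [Nonempty V] (G : WGraph V) (hconn : G.Connected) {p : ℝ} (hp : 1 < p)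
    {a : V → ℝ} (ha : ∀ x, 0 ≤ a x) (ha0 : a ≠ 0) {u : V → ℝ} (hu : u ≠ 0) :
    ∃ v : V → ℝ, v ≠ 0 ∧ G.nehari a p v = 0 ∧
      G.J a p v = ((p - 1) / (2 * (p + 1))) *
        (G.norm1aSq a u / (G.integral fun x => |u x| ^ (p + 1)) ^ (2 / (p + 1)))
          ^ ((p + 1) / (p - 1)) := by
  have hpm : p - 1 ≠ 0 := ne_of_gt (by linarith)
  have hpp : p + 1 ≠ 0 := by positivity
  have hA : 0 < G.norm1aSq a u := norm1aSq_pos G hconn ha ha0 hu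
  have hB : 0 < G.integral fun x => |u x| ^ (p + 1) := intP_pos G p hu
  set A := G.norm1aSq a u with hAdef
  set B := G.integral fun x => |u x| ^ (p + 1) with hBdef
  set t : ℝ := (A / B) ^ ((1:ℝ) / (p - 1)) with htdef
  have ht : 0 < t := Real.rpow_pos_of_pos (div_pos hA hB) _
  have htp : t ^ (p + 1) = t ^ 2 * (A / B) := by
    rw [show p + 1 = 2 + (p - 1) by ring, Real.rpow_add ht, Real.rpow_two]
    congr 1
    rw [htdef, ← Real.rpow_mul (div_pos hA hB).le,
      show (1:ℝ) / (p - 1) * (p - 1) = 1 by field_simp, Real.rpow_one]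
  have hv0 : (fun x => t * u x) ≠ 0 := by
    obtain ⟨x0, hx0⟩ := Function.ne_iff.1 hu
    intro h
    have := congrFun h x0
    simp only [Pi.zero_apply] at this hx0
    rcases mul_eq_zero.1 this with h' | h'
    · exact ht.ne' h'
    · exact hx0 h'
  have hN : G.nehari a p (fun x => t * u x) = 0 := by
    unfold WGraph.nehari
    rw [norm1aSq_smul, intP_smul G p u ht.le, ← hAdef, ← hBdef, htp]
    field_simp
    ring
  refine ⟨fun x => t * u x, hv0, hN, ?_⟩
  rw [J_eq_on_nehari G hp a hN, norm1aSq_smul, ← hAdef]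
  rw [show t ^ 2 * A = (A / B ^ (2 / (p + 1))) ^ ((p + 1) / (p - 1)) from
    rpow_identity hA hB hp]

lemma wellDepth_eq [Nonempty V] (G : WGraph V) (hconn : G.Connected) {p : ℝ} (hp : 1 < p)
    {a : V → ℝ} (ha : ∀ x, 0 ≤ a x) (ha0 : a ≠ 0) :
    wellDepth G a p
      = ((p - 1) / (2 * (p + 1))) * (sobolevInf G a p) ^ ((p + 1) / (p - 1)) := by
  have hpm : (0:ℝ) < p - 1 := by linarith
  have hpp : (0:ℝ) < p + 1 := by linarith
  have hΛ : 0 < sobolevInf G a p := sobolevInf_pos G hconn hp ha ha0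
  set Λ := sobolevInf G a p with hΛdef
  set c1 : ℝ := (p - 1) / (2 * (p + 1)) with hc1
  have hc1p : 0 < c1 := by rw [hc1]; positivity
  set k : ℝ := (p + 1) / (p - 1) with hk
  have hkp : 0 < k := by rw [hk]; positivity
  have hT : 0 < c1 * Λ ^ k := mul_pos hc1p (Real.rpow_pos_of_pos hΛ k)
  have hlb : ∀ r ∈ {r : ℝ | ∃ u : V → ℝ, u ≠ 0 ∧ G.nehari a p u = 0 ∧ r = G.J a p u},
      c1 * Λ ^ k ≤ r := by
    rintro r ⟨u, hu, hN, rfl⟩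
    rw [J_eq_on_nehari G hp a hN]
    exact mul_le_mul_of_nonneg_left (nehari_norm_lb G hconn hp ha ha0 hu hN) hc1p.le
  have h1ne : (fun _ : V => (1:ℝ)) ≠ 0 :=
    fun h => one_ne_zero (congrFun h (Classical.arbitrary V))
  have hne : {r : ℝ | ∃ u : V → ℝ, u ≠ 0 ∧ G.nehari a p u = 0 ∧ r = G.J a p u}.Nonempty := by
    obtain ⟨v, hv, hNv, hJv⟩ := nehari_exists G hconn hp ha ha0 h1ne
    exact ⟨G.J a p v, v, hv, hNv, rfl⟩
  have hge : c1 * Λ ^ k ≤ wellDepth G a p := le_csInf hne hlb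
  have hub : ∀ u : V → ℝ, u ≠ 0 → wellDepth G a p ≤
      c1 * (G.norm1aSq a u / (G.integral fun x => |u x| ^ (p + 1)) ^ (2 / (p + 1))) ^ k := by
    intro u hu
    obtain ⟨v, hv, hNv, hJv⟩ := nehari_exists G hconn hp ha ha0 hu
    have hm := csInf_le ⟨c1 * Λ ^ k, hlb⟩ (show G.J a p v ∈
      {r : ℝ | ∃ u : V → ℝ, u ≠ 0 ∧ G.nehari a p u = 0 ∧ r = G.J a p u}
      from ⟨v, hv, hNv, rfl⟩)
    rw [hJv] at hm
    exact hm
  have hWpos : 0 < wellDepth G a p := lt_of_lt_of_le hT hge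
  have hWc : 0 < wellDepth G a p / c1 := div_pos hWpos hc1p
  have hlbΛ : (wellDepth G a p / c1) ^ (1 / k) ≤ Λ := by
    apply le_csInf
    · exact ⟨_, fun _ : V => (1:ℝ), h1ne, rfl⟩
    rintro r ⟨u, hu, rfl⟩
    have hQup : 0 < G.norm1aSq a u / (G.integral fun x => |u x| ^ (p + 1)) ^ (2 / (p + 1)) :=
      div_pos (norm1aSq_pos G hconn ha ha0 hu)
        (Real.rpow_pos_of_pos (intP_pos G p hu) _)
    have h1 : wellDepth G a p / c1
        ≤ (G.norm1aSq a u / (G.integral fun x => |u x| ^ (p + 1)) ^ (2 / (p + 1))) ^ k := by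
      rw [div_le_iff₀ hc1p]
      have := hub u hu
      nlinarith [this]
    have h2 := Real.rpow_le_rpow hWc.le h1 (one_div_pos.2 hkp).le
    rwa [← Real.rpow_mul hQup.le, show k * (1 / k) = 1 by field_simp, Real.rpow_one] at h2
  have h3 : wellDepth G a p / c1 ≤ Λ ^ k := by
    have h4 := Real.rpow_le_rpow (Real.rpow_nonneg hWc.le _) hlbΛ hkp.le
    rwa [← Real.rpow_mul hWc.le, show 1 / k * k = 1 by field_simp, Real.rpow_one] at h4
  have hle : wellDepth G a p ≤ c1 * Λ ^ k := by
    rw [div_le_iff₀ hc1p] at h3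
    nlinarith [h3]
  linarith

end Aux

/-- membership criteria for the potential well
`𝒲 = {u : J(u) < r, N(u) > 0} ∪ {0}`. -/
theorem well_membership {V : Type*} [Fintype V] [Nonempty V]
    (G : WGraph V) (hconn : G.Connected) (p : ℝ) (hp : 1 < p)
    (a : V → ℝ) (ha : ∀ x, 0 ≤ a x) (ha0 : a ≠ 0) :
    (∀ u : V → ℝ,
      Real.sqrt (G.norm1aSq a u) < Real.sqrt (2 * wellDepth G a p) →
      (G.J a p u < wellDepth G a p ∧ 0 < G.nehari a p u) ∨ u = 0) ∧
    (∀ u : V → ℝ,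
      (G.J a p u < wellDepth G a p ∧ 0 < G.nehari a p u) ∨ u = 0 →
      Real.sqrt (G.norm1aSq a u) <
        Real.sqrt (2 * (p + 1) * wellDepth G a p / (p - 1))) := by
  have hpm : (0:ℝ) < p - 1 := by linarith
  have hpp : (0:ℝ) < p + 1 := by linarith
  have hΛ : 0 < sobolevInf G a p := sobolevInf_pos G hconn hp ha ha0
  have hW : wellDepth G a p
      = ((p - 1) / (2 * (p + 1))) * (sobolevInf G a p) ^ ((p + 1) / (p - 1)) :=
    wellDepth_eq G hconn hp ha ha0
  have hWpos : 0 < wellDepth G a p := by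
    rw [hW]
    exact mul_pos (by positivity) (Real.rpow_pos_of_pos hΛ _)
  constructor
  · -- part (a)
    intro u hsq
    by_cases hu : u = 0
    · exact Or.inr hu
    left
    have hA : 0 < G.norm1aSq a u := norm1aSq_pos G hconn ha ha0 hu
    have hB : 0 < G.integral fun x => |u x| ^ (p + 1) := intP_pos G p hu
    have hA2r : G.norm1aSq a u < 2 * wellDepth G a p :=
      (Real.sqrt_lt_sqrt_iff hA.le).1 hsq
    have hBle := sobolev_B_le G hconn hp ha ha0 hu
    rw [Real.div_rpow hA.le hΛ.le] at hBle
    have hLpos : 0 < (sobolevInf G a p) ^ ((p + 1) / 2) := Real.rpow_pos_of_pos hΛ _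
    rw [le_div_iff₀ hLpos] at hBle
    have hsplit : (G.norm1aSq a u) ^ ((p + 1) / 2)
        = (G.norm1aSq a u) ^ ((p - 1) / 2) * G.norm1aSq a u := by
      rw [show (p + 1) / 2 = (p - 1) / 2 + 1 by ring, Real.rpow_add hA, Real.rpow_one]
    rw [hsplit] at hBle
    have hXY : (G.norm1aSq a u) ^ ((p - 1) / 2)
        < (2 * wellDepth G a p) ^ ((p - 1) / 2) :=
      Real.rpow_lt_rpow hA.le hA2r (by positivity)
    have h2r : (2 * wellDepth G a p) ^ ((p - 1) / 2)
        = ((p - 1) / (p + 1)) ^ ((p - 1) / 2) * (sobolevInf G a p) ^ ((p + 1) / 2) := by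
      rw [hW, show 2 * ((p - 1) / (2 * (p + 1)) * (sobolevInf G a p) ^ ((p + 1) / (p - 1)))
          = (p - 1) / (p + 1) * (sobolevInf G a p) ^ ((p + 1) / (p - 1)) by
        field_simp]
      rw [Real.mul_rpow (by positivity) (Real.rpow_nonneg hΛ.le _),
        ← Real.rpow_mul hΛ.le,
        show (p + 1) / (p - 1) * ((p - 1) / 2) = (p + 1) / 2 by field_simp]
    have hθ1 : ((p - 1) / (p + 1) : ℝ) ^ ((p - 1) / 2) < 1 :=
      Real.rpow_lt_one (by positivity) (by rw [div_lt_one hpp]; linarith) (by positivity)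
    have hθ0 : (0:ℝ) < ((p - 1) / (p + 1) : ℝ) ^ ((p - 1) / 2) :=
      Real.rpow_pos_of_pos (by positivity) _
    have hBA : (G.integral fun x => |u x| ^ (p + 1)) < G.norm1aSq a u := by
      have h5 : (G.norm1aSq a u) ^ ((p - 1) / 2) * G.norm1aSq a u
          < ((p - 1) / (p + 1)) ^ ((p - 1) / 2) * (sobolevInf G a p) ^ ((p + 1) / 2)
              * G.norm1aSq a u := by
        rw [← h2r]; exact mul_lt_mul_of_pos_right hXY hA
      have h6 : ((p - 1) / (p + 1)) ^ ((p - 1) / 2) * (sobolevInf G a p) ^ ((p + 1) / 2)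
          * G.norm1aSq a u
          < (sobolevInf G a p) ^ ((p + 1) / 2) * G.norm1aSq a u := by
        nlinarith [mul_pos hLpos hA]
      have h7 : (G.integral fun x => |u x| ^ (p + 1)) * (sobolevInf G a p) ^ ((p + 1) / 2)
          < G.norm1aSq a u * (sobolevInf G a p) ^ ((p + 1) / 2) := by nlinarith
      exact lt_of_mul_lt_mul_right h7 hLpos.le
    constructor
    · unfold WGraph.J
      have hc : (0:ℝ) < 1 / (p + 1) := by positivity
      nlinarith [mul_pos hc hB]
    · unfold WGraph.nehari; linarith
  · -- part (b)
    intro u h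
    have hgoalpos : 0 < 2 * (p + 1) * wellDepth G a p / (p - 1) := by positivity
    rcases h with ⟨hJ, hN⟩ | rfl
    · have hA : 0 ≤ G.norm1aSq a u := norm1aSq_nonneg G ha u
      have hB : 0 ≤ G.integral fun x => |u x| ^ (p + 1) := intP_nonneg G p u
      have hNB : (G.integral fun x => |u x| ^ (p + 1)) < G.norm1aSq a u := by
        unfold WGraph.nehari at hN; linarith
      have hJA : (p - 1) / (2 * (p + 1)) * G.norm1aSq a u < wellDepth G a p := by
        unfold WGraph.J at hJ
        have hc : (0:ℝ) < 1 / (p + 1) := by positivity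
        have e : (p - 1) / (2 * (p + 1)) * G.norm1aSq a u
            = 1 / 2 * G.norm1aSq a u - 1 / (p + 1) * G.norm1aSq a u := by
          field_simp; ring
        linarith [mul_lt_mul_of_pos_left hNB hc]
      have hAlt : G.norm1aSq a u < 2 * (p + 1) * wellDepth G a p / (p - 1) := by
        rw [lt_div_iff₀ hpm]
        have e2 : 2 * (p + 1) * ((p - 1) / (2 * (p + 1)) * G.norm1aSq a u)
            = G.norm1aSq a u * (p - 1) := by field_simp
        linarith [mul_lt_mul_of_pos_left hJA (show (0:ℝ) < 2 * (p + 1) by positivity)]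
      exact Real.sqrt_lt_sqrt hA hAlt
    · have h0 : G.norm1aSq a (0 : V → ℝ) = 0 := by
        simp [WGraph.norm1aSq, WGraph.dirichlet, WGraph.integral]
      rw [h0, Real.sqrt_zero]
      exact Real.sqrt_pos.2 hgoalpos
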